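/- For every x ∈ [0,1): ∫_x^1 𝒢(ψ(θ)) f(θ) dθ > (1−F(x))·𝒢(x). (Equivalently, the ex-post fixed-price profit from serving types above x strictly exceeds the ex-ante at-will posted-price profit at price x; the difference equals ∫_x^1 ( ∫_{ψ(θ)}^{θ} (G(θ)−G(y)) dy ) f(θ) dθ.) -/

import Mathlib

open MeasureTheory

/-- `F(x) = ∫₀^x f`, with the convention that it is `0` for `x ≤ 0`. -/
noncomputable def cdf (f : ℝ → ℝ) (x : ℝ) : ℝ := ∫ t in Set.Ioc (0:ℝ) x, f t

/-- `𝒢(x) = ∫₀^x G(y) dy`, the left-hand integral of the cdf of `g` (`= 0` for `x ≤ 0`). -/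
noncomputable def calG (g : ℝ → ℝ) (x : ℝ) : ℝ := ∫ y in Set.Ioc (0:ℝ) x, cdf g y

/-- `μ = ∫₀¹ ω g(ω) dω`, the mean cost. -/
noncomputable def muG (g : ℝ → ℝ) : ℝ := ∫ t in Set.Ioc (0:ℝ) 1, t * g t

/-- The virtual valuation `ψ(θ) = θ − (1 − F(θ))/f(θ)`. -/
noncomputable def psi (f : ℝ → ℝ) (θ : ℝ) : ℝ := θ - (1 - cdf f θ) / f θ

lemma cdf_of_nonpos (g : ℝ → ℝ) {y : ℝ} (hy : y ≤ 0) : cdf g y = 0 := by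
  unfold cdf
  rw [Set.Ioc_eq_empty (not_lt.mpr hy)]
  simp

lemma cdf_eq_indicator_primitive (g : ℝ → ℝ) {a y : ℝ} (ha : a ≤ 0) (hy : y ≤ 1) :
    cdf g y = ∫ t in Set.Ioc a y, (Set.Icc (0:ℝ) 1).indicator g t := by
  rw [MeasureTheory.setIntegral_indicator measurableSet_Icc]
  unfold cdf
  apply MeasureTheory.setIntegral_congr_set
  rw [MeasureTheory.ae_eq_set]
  constructor
  · have h : Set.Ioc (0:ℝ) y \ (Set.Ioc a y ∩ Set.Icc 0 1) = ∅ := by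
      ext t
      simp only [Set.mem_diff, Set.mem_Ioc, Set.mem_inter_iff, Set.mem_Icc,
        Set.mem_empty_iff_false, iff_false]
      rintro ⟨⟨h1, h2⟩, h3⟩
      exact h3 ⟨⟨lt_of_le_of_lt ha h1, h2⟩, h1.le, h2.trans hy⟩
    rw [h]; simp
  · apply measure_mono_null _ (measure_singleton (0:ℝ))
    rintro t ⟨⟨⟨hta, hty⟩, ht0, ht1⟩, htn⟩
    simp only [Set.mem_Ioc, not_and, not_le] at htn
    have h0 : ¬ (0 < t) := fun h => absurd hty (not_le.mpr (htn h))
    simp only [Set.mem_singleton_iff]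
    exact le_antisymm (not_lt.mp h0) ht0

lemma calG_eq_primitive (g : ℝ → ℝ) {a y : ℝ} (ha : a ≤ 0) (hy : y ≤ 1)
    (hGi : MeasureTheory.IntegrableOn (cdf g) (Set.Icc a 1)) :
    calG g y = ∫ t in Set.Ioc a y, cdf g t := by
  rcases le_or_gt y 0 with h | h
  · have h1 : calG g y = 0 := by
      unfold calG; rw [Set.Ioc_eq_empty (not_lt.mpr h)]; simp
    have h2 : ∫ t in Set.Ioc a y, cdf g t = 0 := by
      rw [MeasureTheory.setIntegral_congr_fun measurableSet_Ioc
        (fun t ht => cdf_of_nonpos g (le_trans ht.2 h))]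
      simp
    rw [h1, h2]
  · have hunion : Set.Ioc a y = Set.Ioc a 0 ∪ Set.Ioc 0 y :=
      (Set.Ioc_union_Ioc_eq_Ioc ha h.le).symm
    rw [hunion, MeasureTheory.setIntegral_union (Set.Ioc_disjoint_Ioc_of_le le_rfl) measurableSet_Ioc
      (hGi.mono_set (fun t ht => ⟨ht.1.le, ht.2.trans zero_le_one⟩))
      (hGi.mono_set (fun t ht => ⟨ha.trans ht.1.le, ht.2.trans hy⟩))]
    have h0 : ∫ t in Set.Ioc a 0, cdf g t = 0 := by
      rw [MeasureTheory.setIntegral_congr_fun measurableSet_Ioc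
        (fun t ht => cdf_of_nonpos g ht.2)]
      simp
    rw [h0, zero_add]
    rfl

lemma cdf_diff (g : ℝ → ℝ) (hg_int : MeasureTheory.IntegrableOn g (Set.Icc 0 1)) {p q : ℝ}
    (h0 : 0 ≤ p) (hpq : p ≤ q) (hq1 : q ≤ 1) :
    cdf g q - cdf g p = ∫ t in Set.Ioc p q, g t := by
  unfold cdf
  rw [← Set.Ioc_union_Ioc_eq_Ioc h0 hpq,
    MeasureTheory.setIntegral_union (Set.Ioc_disjoint_Ioc_of_le le_rfl) measurableSet_Ioc
      (hg_int.mono_set (fun t ht => ⟨ht.1.le, ht.2.trans (hpq.trans hq1)⟩))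
      (hg_int.mono_set (fun t ht => ⟨h0.trans ht.1.le, ht.2.trans hq1⟩))]
  ring

lemma setInt_pos (g : ℝ → ℝ) (hg_int : MeasureTheory.IntegrableOn g (Set.Icc 0 1))
    (hg_ae : ∀ᵐ t, t ∈ Set.Icc (0:ℝ) 1 → 0 < g t) {p q : ℝ}
    (h0 : 0 ≤ p) (hpq : p < q) (hq1 : q ≤ 1) :
    0 < ∫ t in Set.Ioc p q, g t := by
  have hsub : Set.Ioc p q ⊆ Set.Icc (0:ℝ) 1 :=
    fun t ht => ⟨h0.trans ht.1.le, ht.2.trans hq1⟩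
  have hnn : 0 ≤ᵐ[MeasureTheory.volume.restrict (Set.Ioc p q)] g := by
    filter_upwards [MeasureTheory.ae_restrict_mem measurableSet_Ioc,
      MeasureTheory.ae_restrict_of_ae hg_ae] with t ht hgt
    exact (hgt (hsub ht)).le
  rw [MeasureTheory.setIntegral_pos_iff_support_of_nonneg_ae hnn (hg_int.mono_set hsub)]
  have hnull : MeasureTheory.volume (Set.Ioc p q \ Function.support g) = 0 := by
    have hae : MeasureTheory.volume {t : ℝ | ¬ (t ∈ Set.Icc (0:ℝ) 1 → 0 < g t)} = 0 :=
      MeasureTheory.ae_iff.mp hg_ae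
    apply measure_mono_null _ hae
    rintro t ⟨ht1, ht2⟩
    simp only [Set.mem_setOf_eq, Classical.not_imp]
    exact ⟨hsub ht1, fun h => h.ne' (Function.notMem_support.mp ht2)⟩
  have hle : MeasureTheory.volume (Set.Ioc p q) ≤
      MeasureTheory.volume (Function.support g ∩ Set.Ioc p q) +
        MeasureTheory.volume (Set.Ioc p q \ Function.support g) := by
    refine le_trans (measure_mono ?_) (measure_union_le _ _)
    intro t ht
    by_cases hts : t ∈ Function.support g
    · exact Or.inl ⟨hts, ht⟩
    · exact Or.inr ⟨ht, hts⟩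
  rw [hnull, add_zero] at hle
  calc (0:ENNReal) < MeasureTheory.volume (Set.Ioc p q) := by
        rw [Real.volume_Ioc]; exact ENNReal.ofReal_pos.mpr (by linarith)
    _ ≤ _ := hle

/-- for every `x ∈ [0,1)`, the ex-post fixed-price profit from serving types
above `x` strictly exceeds the ex-ante at-will posted-price profit at price `x`, and the
difference equals `∫_x^1 (∫_{ψ(θ)}^θ (G(θ) − G(y)) dy) f(θ) dθ`. -/
theorem stmt3
    (f g : ℝ → ℝ)
    (hf_int : IntegrableOn f (Set.Icc 0 1))
    (hg_int : IntegrableOn g (Set.Icc 0 1))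
    (hf_ae : ∀ᵐ t, t ∈ Set.Icc (0:ℝ) 1 → 0 < f t)
    (hg_ae : ∀ᵐ t, t ∈ Set.Icc (0:ℝ) 1 → 0 < g t)
    (hf_one : cdf f 1 = 1)
    (hg_one : cdf g 1 = 1)
    (hf_cont : ContinuousOn f (Set.Icc 0 1))
    (hf_pos : ∀ t ∈ Set.Icc (0:ℝ) 1, 0 < f t)
    (hpsi_mono : StrictMonoOn (psi f) (Set.Icc 0 1)) :
    ∀ x ∈ Set.Ico (0:ℝ) 1,
      (1 - cdf f x) * calG g x < (∫ θ in x..1, calG g (psi f θ) * f θ) ∧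
      (∫ θ in x..1, calG g (psi f θ) * f θ) - (1 - cdf f x) * calG g x =
        ∫ θ in x..1, (∫ y in (psi f θ)..θ, (cdf g θ - cdf g y)) * f θ := by
  intro x hx
  obtain ⟨hx0, hx1⟩ := hx
  have hFcont : ContinuousOn (cdf f) (Set.Icc 0 1) :=
    intervalIntegral.continuousOn_primitive hf_int
  have hfne : ∀ t ∈ Set.Icc (0:ℝ) 1, f t ≠ 0 := fun t ht => (hf_pos t ht).ne'
  have hpsicont : ContinuousOn (psi f) (Set.Icc 0 1) := by
    apply ContinuousOn.sub continuousOn_id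
    exact ContinuousOn.div (continuousOn_const.sub hFcont) hf_cont hfne
  obtain ⟨θ₀, hθ₀mem, hθ₀min⟩ :=
    isCompact_Icc.exists_isMinOn (Set.nonempty_Icc.mpr zero_le_one) hpsicont
  set a : ℝ := min (psi f θ₀) (-1) with ha_def
  have ha0 : a ≤ 0 := le_trans (min_le_right _ _) (by norm_num)
  have hpsi_ge : ∀ θ ∈ Set.Icc (0:ℝ) 1, a ≤ psi f θ := fun θ hθ =>
    le_trans (min_le_left _ _) (isMinOn_iff.mp hθ₀min θ hθ)
  have hf_ii : ∀ p q : ℝ, 0 ≤ p → q ≤ 1 → p ≤ q → IntervalIntegrable f volume p q := by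
    intro p q h0 h1 hpq
    apply MeasureTheory.IntegrableOn.intervalIntegrable
    apply hf_int.mono_set
    rw [Set.uIcc_of_le hpq]
    exact Set.Icc_subset_Icc h0 h1
  -- basic facts about F
  have hFle : ∀ θ ∈ Set.Icc (0:ℝ) 1, cdf f θ ≤ 1 := by
    intro θ hθ
    have hd := cdf_diff f hf_int hθ.1 hθ.2 le_rfl
    rw [hf_one] at hd
    have hnn : 0 ≤ ∫ t in Set.Ioc θ 1, f t :=
      setIntegral_nonneg measurableSet_Ioc
        (fun t ht => (hf_pos t ⟨hθ.1.trans ht.1.le, ht.2⟩).le)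
    linarith
  have hFlt : ∀ θ ∈ Set.Ico (0:ℝ) 1, cdf f θ < 1 := by
    intro θ hθ
    have hd := cdf_diff f hf_int hθ.1 hθ.2.le le_rfl
    rw [hf_one] at hd
    have hpos : 0 < ∫ t in Set.Ioc θ 1, f t := by
      rw [← intervalIntegral.integral_of_le hθ.2.le]
      exact intervalIntegral.intervalIntegral_pos_of_pos_on
        (hf_ii θ 1 hθ.1 le_rfl hθ.2.le)
        (fun t ht => hf_pos t ⟨hθ.1.trans ht.1.le, ht.2.le⟩) hθ.2
    linarith
  have hpsi_lt : ∀ θ ∈ Set.Ico (0:ℝ) 1, psi f θ < θ := by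
    intro θ hθ
    have h1 : 0 < (1 - cdf f θ) / f θ :=
      div_pos (by linarith [hFlt θ hθ]) (hf_pos θ ⟨hθ.1, hθ.2.le⟩)
    unfold psi; linarith
  have hpsi_le : ∀ θ ∈ Set.Icc (0:ℝ) 1, psi f θ ≤ θ := by
    intro θ hθ
    have h1 : 0 ≤ (1 - cdf f θ) / f θ :=
      div_nonneg (by linarith [hFle θ hθ]) (hf_pos θ hθ).le
    unfold psi; linarith
  -- continuity of G and 𝒢
  have hGcont : ContinuousOn (cdf g) (Set.Icc a 1) := by
    have hind : IntegrableOn ((Set.Icc (0:ℝ) 1).indicator g) (Set.Icc a 1) :=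
      (hg_int.integrable_indicator measurableSet_Icc).integrableOn
    exact (intervalIntegral.continuousOn_primitive hind).congr
      (fun y hy => cdf_eq_indicator_primitive g ha0 hy.2)
  have hG_int : IntegrableOn (cdf g) (Set.Icc a 1) :=
    hGcont.integrableOn_compact isCompact_Icc
  have hcalG_eq : ∀ y : ℝ, y ≤ 1 → calG g y = ∫ t in Set.Ioc a y, cdf g t :=
    fun y hy => calG_eq_primitive g ha0 hy hG_int
  have hcalGcont : ContinuousOn (calG g) (Set.Icc a 1) :=
    (intervalIntegral.continuousOn_primitive hG_int).congr
      (fun y hy => hcalG_eq y hy.2)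
  have hG_ii : ∀ p q : ℝ, a ≤ p → q ≤ 1 → p ≤ q → IntervalIntegrable (cdf g) volume p q := by
    intro p q h0 h1 hpq
    apply MeasureTheory.IntegrableOn.intervalIntegrable
    apply hG_int.mono_set
    rw [Set.uIcc_of_le hpq]
    exact Set.Icc_subset_Icc h0 h1
  have hcalG_diff : ∀ p q : ℝ, a ≤ p → p ≤ q → q ≤ 1 →
      calG g q - calG g p = ∫ y in p..q, cdf g y := by
    intro p q hap hpq hq1
    rw [hcalG_eq q hq1, hcalG_eq p (hpq.trans hq1),
      ← intervalIntegral.integral_of_le (hap.trans hpq),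
      ← intervalIntegral.integral_of_le hap]
    exact intervalIntegral.integral_interval_sub_left (hG_ii a q le_rfl hq1 (hap.trans hpq))
      (hG_ii a p le_rfl (hpq.trans hq1) hap)
  -- monotonicity facts about G
  have hG_nonneg : ∀ y : ℝ, y ≤ 1 → 0 ≤ cdf g y := by
    intro y hy
    rcases le_or_gt y 0 with h | h
    · rw [cdf_of_nonpos g h]
    · have hd := cdf_diff g hg_int le_rfl h.le hy
      rw [cdf_of_nonpos g le_rfl] at hd
      have hnn : 0 ≤ ∫ t in Set.Ioc 0 y, g t := by
        apply setIntegral_nonneg_of_ae_restrict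
        filter_upwards [MeasureTheory.ae_restrict_mem measurableSet_Ioc,
          MeasureTheory.ae_restrict_of_ae hg_ae] with t ht hgt
        exact (hgt ⟨ht.1.le, ht.2.trans hy⟩).le
      linarith
  have hG_lt : ∀ y θ : ℝ, y < θ → 0 < θ → θ ≤ 1 → cdf g y < cdf g θ := by
    intro y θ hyθ hθ0 hθ1
    rcases le_or_gt y 0 with h | h
    · rw [cdf_of_nonpos g h]
      have hd := cdf_diff g hg_int le_rfl hθ0.le hθ1
      rw [cdf_of_nonpos g le_rfl] at hd
      have := setInt_pos g hg_int hg_ae le_rfl hθ0 hθ1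
      linarith
    · have hd := cdf_diff g hg_int h.le hyθ.le hθ1
      have := setInt_pos g hg_int hg_ae h.le hyθ hθ1
      linarith
  -- pointwise computation of the inner integral
  have hx01 : Set.Icc x 1 ⊆ Set.Icc (0:ℝ) 1 := Set.Icc_subset_Icc_left hx0
  have key : ∀ θ ∈ Set.Icc x 1,
      (∫ y in psi f θ..θ, (cdf g θ - cdf g y)) =
        (θ - psi f θ) * cdf g θ - (calG g θ - calG g (psi f θ)) := by
    intro θ hθ
    have hθ01 := hx01 hθ
    have h1 : psi f θ ≤ θ := hpsi_le θ hθ01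
    have h2 : a ≤ psi f θ := hpsi_ge θ hθ01
    rw [intervalIntegral.integral_sub intervalIntegrable_const
        (hG_ii _ _ h2 hθ01.2 h1),
      intervalIntegral.integral_const, ← hcalG_diff _ _ h2 h1 hθ01.2]
    simp [smul_eq_mul]
  have keyid : ∀ θ ∈ Set.Icc x 1,
      calG g (psi f θ) * f θ =
        (calG g θ * f θ - (1 - cdf f θ) * cdf g θ) +
          ((θ - psi f θ) * cdf g θ - (calG g θ - calG g (psi f θ))) * f θ := by
    intro θ hθ
    have hθ01 := hx01 hθ
    have hfθ : f θ ≠ 0 := hfne θ hθ01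
    have hdiv : (θ - psi f θ) * f θ = 1 - cdf f θ := by
      unfold psi
      field_simp
      ring
    linear_combination (-(cdf g θ)) * hdiv
  -- derivatives
  have hF_deriv : ∀ t ∈ Set.Ioo (0:ℝ) 1, HasDerivAt (cdf f) (f t) t := by
    intro t ht
    have hct : ContinuousAt f t := hf_cont.continuousAt (Icc_mem_nhds ht.1 ht.2)
    have hmeas : StronglyMeasurableAtFilter f (nhds t) :=
      ContinuousOn.stronglyMeasurableAtFilter isOpen_Ioo
        (hf_cont.mono Set.Ioo_subset_Icc_self) t ht
    have hii : IntervalIntegrable f volume 0 t := hf_ii 0 t le_rfl ht.2.le ht.1.le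
    have hprim := intervalIntegral.integral_hasDerivAt_right hii hmeas hct
    apply hprim.congr_of_eventuallyEq
    filter_upwards [eventually_gt_nhds ht.1] with y hy
    rw [intervalIntegral.integral_of_le hy.le]
    rfl
  have hcalG_deriv : ∀ t ∈ Set.Ioo (0:ℝ) 1, HasDerivAt (calG g) (cdf g t) t := by
    intro t ht
    have hta : a < t := lt_of_le_of_lt ha0 ht.1
    have hct : ContinuousAt (cdf g) t := hGcont.continuousAt (Icc_mem_nhds hta ht.2)
    have hmeas : StronglyMeasurableAtFilter (cdf g) (nhds t) :=
      ContinuousOn.stronglyMeasurableAtFilter isOpen_Ioo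
        (hGcont.mono Set.Ioo_subset_Icc_self) t ⟨hta, ht.2⟩
    have hii : IntervalIntegrable (cdf g) volume a t := hG_ii a t le_rfl ht.2.le hta.le
    have hprim := intervalIntegral.integral_hasDerivAt_right hii hmeas hct
    apply hprim.congr_of_eventuallyEq
    filter_upwards [eventually_gt_nhds hta, eventually_lt_nhds ht.2] with y hy hy1
    rw [intervalIntegral.integral_of_le hy.le]
    exact hcalG_eq y hy1.le
  -- integration by parts via FTC
  have hsub_a : Set.Icc x 1 ⊆ Set.Icc a 1 := Set.Icc_subset_Icc (ha0.trans hx0) le_rfl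
  have hΦcont : ContinuousOn (fun t => (1 - cdf f t) * calG g t) (Set.Icc x 1) :=
    (continuousOn_const.sub (hFcont.mono hx01)).mul (hcalGcont.mono hsub_a)
  have hΦderiv : ∀ t ∈ Set.Ioo x 1,
      HasDerivAt (fun t => (1 - cdf f t) * calG g t)
        ((1 - cdf f t) * cdf g t - calG g t * f t) t := by
    intro t ht
    have ht01 : t ∈ Set.Ioo (0:ℝ) 1 := ⟨lt_of_le_of_lt hx0 ht.1, ht.2⟩
    have h1 : HasDerivAt (fun y => 1 - cdf f y) (-(f t)) t :=
      (hF_deriv t ht01).const_sub 1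
    have h2 := hcalG_deriv t ht01
    have h3 := h1.mul h2
    convert h3 using 1
    · rfl
    · rfl
    · rfl
    · ring
  have hΦ'cont : ContinuousOn (fun t => (1 - cdf f t) * cdf g t - calG g t * f t)
      (Set.Icc x 1) :=
    ((continuousOn_const.sub (hFcont.mono hx01)).mul (hGcont.mono hsub_a)).sub
      ((hcalGcont.mono hsub_a).mul (hf_cont.mono hx01))
  have hIBP : (∫ t in x..1, ((1 - cdf f t) * cdf g t - calG g t * f t)) =
      (1 - cdf f 1) * calG g 1 - (1 - cdf f x) * calG g x := by
    apply intervalIntegral.integral_eq_sub_of_hasDeriv_right_of_le hx1.le hΦcont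
      (fun t ht => (hΦderiv t ht).hasDerivWithinAt)
    apply ContinuousOn.intervalIntegrable
    rwa [Set.uIcc_of_le hx1.le]
  rw [hf_one, sub_self, zero_mul, zero_sub] at hIBP
  -- continuity of integrands
  have hpsix_cont : ContinuousOn (fun θ => calG g (psi f θ)) (Set.Icc x 1) := by
    apply ContinuousOn.comp hcalGcont (hpsicont.mono hx01)
    intro θ hθ
    exact ⟨hpsi_ge θ (hx01 hθ), (hpsi_le θ (hx01 hθ)).trans hθ.2⟩
  have hCcont : ContinuousOn
      (fun θ => ((θ - psi f θ) * cdf g θ - (calG g θ - calG g (psi f θ))) * f θ)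
      (Set.Icc x 1) := by
    apply ContinuousOn.mul _ (hf_cont.mono hx01)
    apply ContinuousOn.sub
    · exact (continuousOn_id.sub (hpsicont.mono hx01)).mul (hGcont.mono hsub_a)
    · exact (hcalGcont.mono hsub_a).sub hpsix_cont
  have hBcont : ContinuousOn
      (fun θ => calG g θ * f θ - (1 - cdf f θ) * cdf g θ) (Set.Icc x 1) :=
    ((hcalGcont.mono hsub_a).mul (hf_cont.mono hx01)).sub
      ((continuousOn_const.sub (hFcont.mono hx01)).mul (hGcont.mono hsub_a))
  have hB_ii : IntervalIntegrable
      (fun θ => calG g θ * f θ - (1 - cdf f θ) * cdf g θ) volume x 1 := by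
    apply ContinuousOn.intervalIntegrable; rwa [Set.uIcc_of_le hx1.le]
  have hC_ii : IntervalIntegrable
      (fun θ => ((θ - psi f θ) * cdf g θ - (calG g θ - calG g (psi f θ))) * f θ)
      volume x 1 := by
    apply ContinuousOn.intervalIntegrable; rwa [Set.uIcc_of_le hx1.le]
  -- main equality
  have h1 : (∫ θ in x..1, calG g (psi f θ) * f θ) =
      ∫ θ in x..1, ((calG g θ * f θ - (1 - cdf f θ) * cdf g θ) +
        ((θ - psi f θ) * cdf g θ - (calG g θ - calG g (psi f θ))) * f θ) := by
    apply intervalIntegral.integral_congr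
    intro θ hθ
    rw [Set.uIcc_of_le hx1.le] at hθ
    exact keyid θ hθ
  have h2 : (∫ θ in x..1, (calG g θ * f θ - (1 - cdf f θ) * cdf g θ)) =
      (1 - cdf f x) * calG g x := by
    have hneg : (∫ θ in x..1, (calG g θ * f θ - (1 - cdf f θ) * cdf g θ)) =
        - ∫ θ in x..1, ((1 - cdf f θ) * cdf g θ - calG g θ * f θ) := by
      rw [← intervalIntegral.integral_neg]
      apply intervalIntegral.integral_congr
      intro θ _
      ring
    rw [hneg, hIBP, neg_neg]
  have hgoal_eq : (∫ θ in x..1, calG g (psi f θ) * f θ) =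
      (1 - cdf f x) * calG g x +
        ∫ θ in x..1, ((θ - psi f θ) * cdf g θ - (calG g θ - calG g (psi f θ))) * f θ := by
    rw [h1, intervalIntegral.integral_add hB_ii hC_ii, h2]
  have hRHS : (∫ θ in x..1, (∫ y in (psi f θ)..θ, (cdf g θ - cdf g y)) * f θ) =
      ∫ θ in x..1, ((θ - psi f θ) * cdf g θ - (calG g θ - calG g (psi f θ))) * f θ := by
    apply intervalIntegral.integral_congr
    intro θ hθ
    rw [Set.uIcc_of_le hx1.le] at hθ
    beta_reduce
    rw [key θ hθ]
  -- positivity of the correction term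
  have hCpos : 0 < ∫ θ in x..1,
      ((θ - psi f θ) * cdf g θ - (calG g θ - calG g (psi f θ))) * f θ := by
    apply intervalIntegral.intervalIntegral_pos_of_pos_on hC_ii _ hx1
    intro θ hθ
    have hθIcc : θ ∈ Set.Icc x 1 := ⟨hθ.1.le, hθ.2.le⟩
    have hθ01 : θ ∈ Set.Icc (0:ℝ) 1 := hx01 hθIcc
    have hθpos : 0 < θ := lt_of_le_of_lt hx0 hθ.1
    have hψlt : psi f θ < θ := hpsi_lt θ ⟨hθ01.1, hθ.2⟩
    have hinner : 0 < ∫ y in (psi f θ)..θ, (cdf g θ - cdf g y) := by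
      apply intervalIntegral.intervalIntegral_pos_of_pos_on
        (intervalIntegrable_const.sub
          (hG_ii _ _ (hpsi_ge θ hθ01) hθ01.2 hψlt.le))
        _ hψlt
      intro y hy
      have := hG_lt y θ hy.2 hθpos hθ01.2
      linarith
    rw [key θ hθIcc] at hinner
    exact mul_pos hinner (hf_pos θ hθ01)
  constructor
  · rw [hgoal_eq]
    linarith
  · rw [hRHS, hgoal_eq]
    ring
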